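/- For n >= 3, the number of flattened ({2})-insertion parking functions of order n with exactly 2 runs equals sum_{i=0}^{n-3} 2^i * (n-1-i). -/

import Mathlib

namespace FlatPF

/-- Decomposition of a word into maximal weakly increasing runs. -/
def runs : List ℕ → List (List ℕ)
  | [] => []
  | a :: l =>
    match runs l with
    | [] => [[a]]
    | [] :: rs => [a] :: rs
    | (b :: t) :: rs => if a ≤ b then (a :: b :: t) :: rs else [a] :: (b :: t) :: rs

/-- The number of maximal weakly increasing runs of a word. -/
def numRuns (w : List ℕ) : ℕ := (runs w).length

/-- A word is flattened if the leading values of its runs are weakly increasing. -/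
def IsFlattened (w : List ℕ) : Prop :=
  List.Chain' (· ≤ ·) ((runs w).map (fun r => r.headD 0))

/-- A word is a parking function: entries in `[m]` and the weakly increasing
rearrangement `(a'_1, …, a'_m)` satisfies `a'_i ≤ i`. -/
def IsPF (w : List ℕ) : Prop :=
  (∀ x ∈ w, 1 ≤ x ∧ x ≤ w.length) ∧
  ∀ i < w.length, (w.mergeSort (· ≤ ·)).getD i 0 ≤ i + 1

/-- `w` is obtained by inserting the elements of the multiset `S` into some
permutation of `[n]`, keeping the letters of the permutation in relative order. -/
def IsInsertion (S : Multiset ℕ) (n : ℕ) (w : List ℕ) : Prop :=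
  (↑w : Multiset ℕ) = ↑(List.range' 1 n) + S ∧
  ∃ p : List ℕ, p.Perm (List.range' 1 n) ∧ p.Sublist w

/-- Flattened `S`-insertion parking functions of order `n`. -/
def flatIns (S : Multiset ℕ) (n : ℕ) : Set (List ℕ) :=
  {w | IsInsertion S n w ∧ IsFlattened w}

/-- Flattened `S`-insertion parking functions of order `n` with exactly `k` runs. -/
def flatInsK (S : Multiset ℕ) (n k : ℕ) : Set (List ℕ) :=
  {w | IsInsertion S n w ∧ IsFlattened w ∧ numRuns w = k}

/-- `f(S; n, k)`, the number of flattened `S`-insertion parking functions of order `n`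
with exactly `k` runs.  In particular `fS 0 n k` is the number of flattened
permutations of `[n]` with `k` runs. -/
noncomputable def fS (S : Multiset ℕ) (n k : ℕ) : ℕ := (flatInsK S n k).ncard

lemma runs_ne_nil : ∀ w, ∀ r ∈ runs w, r ≠ [] := by
  intro w
  induction w with
  | nil => simp [runs]
  | cons a l ih =>
    intro r hr
    rw [runs] at hr
    rcases h : runs l with _ | ⟨_ | ⟨b, t⟩, rs⟩ <;> rw [h] at hr
    · simp at hr; simp [hr]
    · exact absurd rfl (ih [] (h ▸ List.mem_cons_self))
    · by_cases hab : a ≤ b <;> simp [hab] at hr <;>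
        rcases hr with hr | hr <;> first
          | (subst hr; simp)
          | exact ih r (h ▸ (by simp [hr] : r ∈ (b :: t) :: rs))

lemma runs_cons (a l) : ∃ t rs, runs (a :: l) = (a :: t) :: rs := by
  rw [runs]
  rcases h : runs l with _ | ⟨_ | ⟨b, t⟩, rs⟩
  · exact ⟨[], [], rfl⟩
  · exact ⟨[], rs, rfl⟩
  · by_cases hab : a ≤ b
    · exact ⟨b :: t, rs, by simp [hab]⟩
    · exact ⟨[], (b :: t) :: rs, by simp [hab]⟩

lemma runs_join : ∀ w, (runs w).flatten = w := by
  intro w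
  induction w with
  | nil => rfl
  | cons a l ih =>
    rw [runs]
    rcases h : runs l with _ | ⟨_ | ⟨b, t⟩, rs⟩ <;> rw [h] at ih
    · simp at ih; simp [ih]
    · exact absurd rfl (runs_ne_nil l [] (h ▸ List.mem_cons_self))
    · by_cases hab : a ≤ b <;> simp [hab] <;> simpa using ih

lemma runs_chain : ∀ w, ∀ r ∈ runs w, List.Chain' (· ≤ ·) r := by
  intro w
  induction w with
  | nil => simp [runs]
  | cons a l ih =>
    intro r hr
    rw [runs] at hr
    rcases h : runs l with _ | ⟨_ | ⟨b, t⟩, rs⟩ <;> rw [h] at hr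
    · simp at hr; subst hr; exact List.isChain_singleton a
    · exact absurd rfl (runs_ne_nil l [] (h ▸ List.mem_cons_self))
    · by_cases hab : a ≤ b <;> simp [hab] at hr <;> rcases hr with hr | hr
      · subst hr
        have := ih (b :: t) (h ▸ List.mem_cons_self)
        exact List.IsChain.cons_cons hab this
      · exact ih r (h ▸ (by simp [hr] : r ∈ (b :: t) :: rs))
      · subst hr; exact List.isChain_singleton a
      · exact ih r (h ▸ (by simp [hr] : r ∈ (b :: t) :: rs))

lemma runs_sorted_eq : ∀ w, List.Chain' (· ≤ ·) w → w ≠ [] → runs w = [w] := by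
  intro w
  induction w with
  | nil => simp
  | cons a l ih =>
    intro hc _
    rcases l with _ | ⟨b, t⟩
    · rfl
    · have hab : a ≤ b := (List.isChain_cons_cons.mp hc).1
      have := ih (List.isChain_cons_cons.mp hc).2 (by simp)
      rw [runs, this]
      simp [hab]

lemma runs_append (A B : List ℕ) (hA : List.Chain' (· ≤ ·) A) (hAne : A ≠ [])
    (hBne : B ≠ []) (hd : B.headD 0 < A.getLastD 0) :
    runs (A ++ B) = A :: runs B := by
  induction A with
  | nil => simp at hAne
  | cons a A' ih =>
    rcases A' with _ | ⟨a', A''⟩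
    · rcases B with _ | ⟨b, B'⟩
      · simp at hBne
      · have hd' : b < a := by simpa using hd
        obtain ⟨t, rs, hbr⟩ := runs_cons b B'
        show runs (a :: (b :: B')) = [a] :: runs (b :: B')
        rw [runs, hbr]
        simp [Nat.not_le.mpr hd']
    · have hgl : (a :: a' :: A'').getLastD 0 = (a' :: A'').getLastD 0 := by
        simp [List.getLastD]
      have ih' := ih (List.isChain_cons_cons.mp hA).2 (by simp) (hgl ▸ hd)
      have hab : a ≤ a' := (List.isChain_cons_cons.mp hA).1
      show runs (a :: ((a' :: A'') ++ B)) = _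
      rw [runs]
      have h2 : (a' :: A'') ++ B = a' :: (A'' ++ B) := rfl
      rw [h2] at ih' ⊢
      rw [ih']
      simp [hab]

lemma runs_descent : ∀ w r1 r2 rs, runs w = r1 :: r2 :: rs → r2.headD 0 < r1.getLastD 0 := by
  intro w
  induction w with
  | nil => intro r1 r2 rs h; simp [runs] at h
  | cons a l ih =>
    intro r1 r2 rs h
    rw [runs] at h
    rcases hl : runs l with _ | ⟨_ | ⟨b, t⟩, rs'⟩ <;> rw [hl] at h
    · simp at h
    · exact absurd rfl (runs_ne_nil l [] (hl ▸ List.mem_cons_self))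
    · by_cases hab : a ≤ b <;> simp [hab] at h
      · obtain ⟨h1, h2⟩ := h
        rcases rs' with _ | ⟨r2', rs''⟩
        · simp at h2
        · have hih := ih (b :: t) r2' rs'' hl
          rw [List.cons_eq_cons] at h2
          rw [← h1, ← h2.1]
          simpa [List.getLastD] using hih
      · obtain ⟨h1, h2, _⟩ := h
        rw [← h1, ← h2]
        simpa using Nat.lt_of_not_le hab

def Mn (n : ℕ) : Multiset ℕ := 2 ::ₘ ↑(List.range' 1 n)

lemma insertion_iff (n : ℕ) (w : List ℕ) :
    IsInsertion {2} n w ↔ (↑w : Multiset ℕ) = Mn n := by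
  constructor
  · rintro ⟨h, -⟩
    rw [h, Mn, add_comm, Multiset.singleton_add]
  · intro h
    refine ⟨by rw [h, Mn, add_comm, Multiset.singleton_add], ?_⟩
    have h2 : 2 ∈ w := by
      have : (2 : ℕ) ∈ (↑w : Multiset ℕ) := by rw [h, Mn]; exact Multiset.mem_cons_self _ _
      simpa using this
    obtain ⟨u, v, huv⟩ := List.append_of_mem h2
    refine ⟨u ++ v, ?_, ?_⟩
    · rw [← Multiset.coe_eq_coe]
      have : (↑w : Multiset ℕ) = 2 ::ₘ (↑(u ++ v) : Multiset ℕ) := by rw [huv]; simp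
      rw [h, Mn] at this
      exact (Multiset.cons_inj_right 2).mp this.symm
    · rw [huv]
      exact (List.sublist_cons_self 2 v).append_left u

lemma sort_unique (X : Multiset ℕ) (l : List ℕ) (hs : List.Pairwise (· ≤ ·) l)
    (hl : (↑l : Multiset ℕ) = X) : X.sort (· ≤ ·) = l :=
  List.Perm.eq_of_pairwise' (Multiset.pairwise_sort _ _) hs
    (Multiset.coe_eq_coe.mp (by rw [Multiset.sort_eq, hl]))

lemma mem_char (n : ℕ) (w : List ℕ) : w ∈ flatInsK {2} n 2 ↔
    ∃ r1 r2 : List ℕ, w = r1 ++ r2 ∧ List.Chain' (· ≤ ·) r1 ∧ List.Chain' (· ≤ ·) r2 ∧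
      r1 ≠ [] ∧ r2 ≠ [] ∧ r2.headD 0 < r1.getLastD 0 ∧ r1.headD 0 ≤ r2.headD 0 ∧
      (↑w : Multiset ℕ) = Mn n := by
  constructor
  · rintro ⟨hins, hflat, hruns⟩
    rcases hr : runs w with _ | ⟨r1, _ | ⟨r2, rs⟩⟩ <;>
      rw [numRuns, hr] at hruns <;> simp at hruns
    subst hruns
    refine ⟨r1, r2, ?_, runs_chain w r1 (hr ▸ by simp), runs_chain w r2 (hr ▸ by simp),
      runs_ne_nil w r1 (hr ▸ by simp), runs_ne_nil w r2 (hr ▸ by simp),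
      runs_descent w r1 r2 [] hr, ?_, (insertion_iff n w).mp hins⟩
    · have := runs_join w
      rw [hr] at this
      simpa using this.symm
    · rw [IsFlattened, hr] at hflat
      simpa [List.Chain', List.isChain_pair] using hflat
  · rintro ⟨r1, r2, hw, hc1, hc2, hn1, hn2, hdes, hhead, hmult⟩
    have hr : runs w = [r1, r2] := by
      rw [hw, runs_append r1 r2 hc1 hn1 hn2 hdes, runs_sorted_eq r2 hc2 hn2]
    refine ⟨(insertion_iff n w).mpr hmult, ?_, ?_⟩
    · rw [IsFlattened, hr]
      simpa [List.Chain', List.isChain_pair] using hhead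
    · rw [numRuns, hr]; rfl


def Bm (j : ℕ) (S : Finset ℕ) : Multiset ℕ := Multiset.replicate j 2 + S.val
def sortM (n : ℕ) : List ℕ := 1 :: 2 :: List.range' 2 (n - 1)
def Phi (n j : ℕ) (S : Finset ℕ) : List ℕ :=
  ((Mn n - Bm j S).sort (· ≤ ·)) ++ ((Bm j S).sort (· ≤ ·))

lemma nodup_range' (s n : ℕ) : (List.range' s n).Nodup :=
  List.nodup_range' (s := s) (n := n) 1 (by norm_num)

lemma count_Mn (n x : ℕ) : (Mn n).count x =
    (if x = 2 then 1 else 0) + (if 1 ≤ x ∧ x ≤ n then 1 else 0) := by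
  rw [Mn, Multiset.count_cons]
  have h1 : Multiset.count x ↑(List.range' 1 n) = if 1 ≤ x ∧ x ≤ n then 1 else 0 := by
    rw [Multiset.coe_count]
    by_cases h : x ∈ List.range' 1 n
    · rw [List.count_eq_one_of_mem (nodup_range' 1 n) h]
      have := List.mem_range'_1.mp h
      simp only [if_pos (by omega : 1 ≤ x ∧ x ≤ n)]
    · rw [List.count_eq_zero_of_not_mem h]
      have : ¬ (1 ≤ x ∧ x ≤ n) := fun hc => h (List.mem_range'_1.mpr ⟨hc.1, by omega⟩)
      simp [this]
  omega

lemma count_val (S : Finset ℕ) (x : ℕ) :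
    Multiset.count x S.val = if x ∈ S then 1 else 0 := by
  by_cases h : x ∈ S
  · rw [if_pos h, Multiset.count_eq_one_of_mem S.nodup (Finset.mem_def.mp h)]
  · rw [if_neg h, Multiset.count_eq_zero.mpr (fun hc => h (Finset.mem_def.mpr hc))]

lemma count_Bm (j : ℕ) (S : Finset ℕ) (x : ℕ) : (Bm j S).count x =
    (if x = 2 then j else 0) + (if x ∈ S then 1 else 0) := by
  rw [Bm, Multiset.count_add, Multiset.count_replicate, count_val]
  congr 1
  by_cases h : x = 2 <;> simp [h] <;> omega

lemma range'_one_eq (n : ℕ) (hn : 1 ≤ n) :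
    List.range' 1 n = 1 :: List.range' 2 (n - 1) := by
  conv_lhs => rw [show n = (n - 1) + 1 by omega]
  rw [List.range'_succ]

lemma sortM_coe (n : ℕ) (hn : 1 ≤ n) : (↑(sortM n) : Multiset ℕ) = Mn n := by
  rw [sortM, Mn, range'_one_eq n hn]
  show (1 ::ₘ 2 ::ₘ (↑(List.range' 2 (n - 1)) : Multiset ℕ)) =
    2 ::ₘ 1 ::ₘ (↑(List.range' 2 (n - 1)) : Multiset ℕ)
  rw [Multiset.cons_swap]

lemma sortM_sorted (n : ℕ) : List.Pairwise (· ≤ ·) (sortM n) := by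
  rw [sortM]
  refine List.pairwise_cons.mpr ⟨?_, List.pairwise_cons.mpr ⟨?_, ?_⟩⟩
  · intro b hb
    simp [List.mem_range'_1] at hb
    omega
  · intro b hb
    simp [List.mem_range'_1] at hb
    omega
  · exact List.Pairwise.imp (fun h => Nat.le_of_lt h) (List.pairwise_lt_range' ..)



lemma headD_mem (l : List ℕ) (h : l ≠ []) : l.headD 0 ∈ l := by
  rcases l with _ | ⟨a, t⟩
  · simp at h
  · simp

lemma getLastD_mem (l : List ℕ) (h : l ≠ []) : l.getLastD 0 ∈ l := by
  induction l with
  | nil => simp at h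
  | cons a t ih =>
    rcases t with _ | ⟨b, t'⟩
    · simp
    · have := ih (by simp)
      simp only [List.getLastD] at this ⊢
      exact List.mem_cons_of_mem _ this

lemma sorted_headD_le (l : List ℕ) (hs : List.Pairwise (· ≤ ·) l) (x : ℕ) (hx : x ∈ l) :
    l.headD 0 ≤ x := by
  rcases l with _ | ⟨a, t⟩
  · simp at hx
  · rcases List.mem_cons.mp hx with h | h
    · simp [h]
    · simpa using (List.pairwise_cons.mp hs).1 x h

lemma sorted_le_getLastD (l : List ℕ) (hs : List.Pairwise (· ≤ ·) l) (x : ℕ) (hx : x ∈ l) :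
    x ≤ l.getLastD 0 := by
  induction l with
  | nil => simp at hx
  | cons a t ih =>
    rcases t with _ | ⟨b, t'⟩
    · simp at hx; simp [hx]
    · have hgl : (a :: b :: t').getLastD 0 = (b :: t').getLastD 0 := by simp [List.getLastD]
      rw [hgl]
      rcases List.mem_cons.mp hx with h | h
      · subst h
        exact le_trans ((List.pairwise_cons.mp hs).1 _ (getLastD_mem _ (by simp)))
          (le_refl _)
      · exact ih (List.pairwise_cons.mp hs).2 h

lemma sort_ne_nil (X : Multiset ℕ) (h : X ≠ 0) : X.sort (· ≤ ·) ≠ [] := by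
  intro hc
  apply h
  have := Multiset.sort_eq X (· ≤ ·)
  rw [hc] at this
  exact this.symm

lemma two_notin_S {n : ℕ} {S : Finset ℕ} (hS : S ⊆ Finset.Icc 3 n) : 2 ∉ S := by
  intro h
  have := Finset.mem_Icc.mp (hS h)
  omega

lemma Bm_le {n j : ℕ} {S : Finset ℕ} (hn : 2 ≤ n) (hj : j ≤ 2)
    (hS : S ⊆ Finset.Icc 3 n) : Bm j S ≤ Mn n := by
  rw [Multiset.le_iff_count]
  intro x
  rw [count_Bm, count_Mn]
  by_cases hxS : x ∈ S
  · have hx3 := Finset.mem_Icc.mp (hS hxS)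
    rw [if_pos hxS]
    split_ifs <;> omega
  · rw [if_neg hxS]
    have h2 : x = 2 → 2 ≤ n := fun _ => hn
    split_ifs <;> omega

lemma one_notin_Bm {n j : ℕ} {S : Finset ℕ} (hS : S ⊆ Finset.Icc 3 n) :
    (Bm j S).count 1 = 0 := by
  rw [count_Bm]
  have : 1 ∉ S := fun h => by have := Finset.mem_Icc.mp (hS h); omega
  simp [this]

lemma mem_Mn_ge_one {n x : ℕ} (hx : x ∈ Mn n) : 1 ≤ x := by
  rw [Mn] at hx
  rcases Multiset.mem_cons.mp hx with h | h
  · omega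
  · have := List.mem_range'_1.mp (by simpa using h)
    omega

lemma Mn_card (n : ℕ) : Multiset.card (Mn n) = n + 1 := by
  rw [Mn]
  simp

lemma Bm_card {j : ℕ} {S : Finset ℕ} : Multiset.card (Bm j S) = j + S.card := by
  rw [Bm, Multiset.card_add, Multiset.card_replicate]
  rfl

lemma sortMn_eq (n : ℕ) (hn : 1 ≤ n) : (Mn n).sort (· ≤ ·) = sortM n :=
  sort_unique _ _ (sortM_sorted n) (sortM_coe n hn)


lemma phi_A_ne {n j : ℕ} {S : Finset ℕ} (hn : 3 ≤ n) (hj : j ≤ 2)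
    (hS : S ⊆ Finset.Icc 3 n) : Mn n - Bm j S ≠ 0 := by
  intro h
  have hle := Bm_le (by omega) hj hS
  have hcard := Multiset.card_sub hle
  rw [Mn_card, Bm_card] at hcard
  have hSc : S.card ≤ n - 2 := by
    have := Finset.card_le_card hS
    rwa [Nat.card_Icc] at this
  rw [h] at hcard
  simp only [Multiset.card_zero] at hcard
  omega

lemma one_mem_A {n j : ℕ} {S : Finset ℕ} (hn : 3 ≤ n) (hS : S ⊆ Finset.Icc 3 n) :
    (1 : ℕ) ∈ Mn n - Bm j S := by
  rw [← Multiset.count_pos, Multiset.count_sub, count_Mn, one_notin_Bm hS]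
  simp [show (1:ℕ) ≤ n by omega]

lemma phi_sA_headD {n j : ℕ} {S : Finset ℕ} (hn : 3 ≤ n) (hj : j ≤ 2)
    (hS : S ⊆ Finset.Icc 3 n) :
    ((Mn n - Bm j S).sort (· ≤ ·)).headD 0 = 1 := by
  apply le_antisymm
  · exact sorted_headD_le _ (Multiset.pairwise_sort _ _) 1
      ((Multiset.mem_sort _).mpr (one_mem_A hn hS))
  · apply mem_Mn_ge_one (n := n)
    have hmem := headD_mem _ (sort_ne_nil _ (phi_A_ne hn hj hS))
    have := (Multiset.mem_sort (· ≤ ·)).mp hmem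
    exact Multiset.mem_of_le (Multiset.sub_le_self _ _) this

lemma phi_descent {n j : ℕ} {S : Finset ℕ} (hn : 3 ≤ n) (hj : j ≤ 2)
    (hS : S ⊆ Finset.Icc 3 n) (hne : Phi n j S ≠ sortM n) :
    ((Bm j S).sort (· ≤ ·)).headD 0 < ((Mn n - Bm j S).sort (· ≤ ·)).getLastD 0 := by
  by_contra h
  push_neg at h
  apply hne
  have hsorted : List.Pairwise (· ≤ ·)
      (((Mn n - Bm j S).sort (· ≤ ·)) ++ ((Bm j S).sort (· ≤ ·))) := by
    rw [List.pairwise_append]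
    refine ⟨Multiset.pairwise_sort _ _, Multiset.pairwise_sort _ _, fun x hx y hy => ?_⟩
    show x ≤ y
    exact le_trans (sorted_le_getLastD _ (Multiset.pairwise_sort _ _) x hx)
      (le_trans h (sorted_headD_le _ (Multiset.pairwise_sort _ _) y hy))
  have hco : (↑(((Mn n - Bm j S).sort (· ≤ ·)) ++ ((Bm j S).sort (· ≤ ·))) : Multiset ℕ)
      = Mn n := by
    rw [← Multiset.coe_add, Multiset.sort_eq, Multiset.sort_eq]
    exact tsub_add_cancel_of_le (Bm_le (by omega) hj hS)
  have := sort_unique _ _ hsorted hco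
  rw [Phi, ← this, sortMn_eq n (by omega)]

lemma phi_mem {n j : ℕ} {S : Finset ℕ} (hn : 3 ≤ n) (hj : j ≤ 2)
    (hS : S ⊆ Finset.Icc 3 n) (hB0 : Bm j S ≠ 0) (hne : Phi n j S ≠ sortM n) :
    Phi n j S ∈ flatInsK {2} n 2 := by
  rw [mem_char]
  refine ⟨(Mn n - Bm j S).sort (· ≤ ·), (Bm j S).sort (· ≤ ·), rfl,
    List.isChain_iff_pairwise.mpr (Multiset.pairwise_sort _ _),
    List.isChain_iff_pairwise.mpr (Multiset.pairwise_sort _ _),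
    sort_ne_nil _ (phi_A_ne hn hj hS), sort_ne_nil _ hB0,
    phi_descent hn hj hS hne, ?_, ?_⟩
  · rw [phi_sA_headD hn hj hS]
    apply mem_Mn_ge_one (n := n)
    have hmem := headD_mem _ (sort_ne_nil _ hB0)
    exact Multiset.mem_of_le (Bm_le (by omega) hj hS)
      ((Multiset.mem_sort (· ≤ ·)).mp hmem)
  · rw [Phi, ← Multiset.coe_add, Multiset.sort_eq, Multiset.sort_eq]
    exact tsub_add_cancel_of_le (Bm_le (by omega) hj hS)

lemma phi_runs {n j : ℕ} {S : Finset ℕ} (hn : 3 ≤ n) (hj : j ≤ 2)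
    (hS : S ⊆ Finset.Icc 3 n) (hB0 : Bm j S ≠ 0) (hne : Phi n j S ≠ sortM n) :
    runs (Phi n j S) = [(Mn n - Bm j S).sort (· ≤ ·), (Bm j S).sort (· ≤ ·)] := by
  rw [Phi, runs_append _ _ (List.isChain_iff_pairwise.mpr (Multiset.pairwise_sort _ _))
    (sort_ne_nil _ (phi_A_ne hn hj hS)) (sort_ne_nil _ hB0) (phi_descent hn hj hS hne),
    runs_sorted_eq _ (List.isChain_iff_pairwise.mpr (Multiset.pairwise_sort _ _))
    (sort_ne_nil _ hB0)]


lemma coe_sort_list (l : List ℕ) (hc : List.Chain' (· ≤ ·) l) :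
    (↑l : Multiset ℕ).sort (· ≤ ·) = l :=
  sort_unique _ _ (List.isChain_iff_pairwise.mp hc) rfl

lemma numRuns_sortM (n : ℕ) : numRuns (sortM n) = 1 := by
  rw [numRuns, runs_sorted_eq _ (List.isChain_iff_pairwise.mpr (sortM_sorted n)) (by simp [sortM])]
  rfl

lemma mem_image_rev {n : ℕ} (hn : 3 ≤ n) (w : List ℕ) (hw : w ∈ flatInsK {2} n 2) :
    ∃ j S, j ≤ 2 ∧ S ⊆ Finset.Icc 3 n ∧ Bm j S ≠ 0 ∧ Phi n j S ≠ sortM n ∧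
      w = Phi n j S := by
  obtain ⟨r1, r2, hweq, hc1, hc2, hne1, hne2, hdes, hhead, hmult⟩ := (mem_char n w).mp hw
  rw [hweq, ← Multiset.coe_add] at hmult
  have hBle : (↑r2 : Multiset ℕ) ≤ Mn n := by
    rw [← hmult]; exact Multiset.le_add_left _ _
  have h1B : (1 : ℕ) ∉ r2 := by
    intro h1
    have hhd2 : r2.headD 0 ≤ 1 :=
      sorted_headD_le _ (List.isChain_iff_pairwise.mp hc2) 1 h1
    have hhd1 : r1.headD 0 ≤ 1 := le_trans hhead hhd2
    have h1r1 : (1 : ℕ) ∈ r1 := by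
      have hm : r1.headD 0 ∈ r1 := headD_mem _ hne1
      have h1le : 1 ≤ r1.headD 0 := by
        apply mem_Mn_ge_one (n := n)
        rw [← hmult]
        exact Multiset.mem_add.mpr (Or.inl (by simpa using hm))
      have heq1 : r1.headD 0 = 1 := by omega
      rwa [heq1] at hm
    have hcnt : Multiset.count 1 (Mn n) = 1 := by
      rw [count_Mn]; simp [show 1 ≤ n by omega]
    rw [← hmult, Multiset.count_add] at hcnt
    have c1 : 1 ≤ Multiset.count 1 (↑r1 : Multiset ℕ) := by
      rw [Nat.one_le_iff_ne_zero, Ne, Multiset.count_eq_zero]; simpa using h1r1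
    have c2 : 1 ≤ Multiset.count 1 (↑r2 : Multiset ℕ) := by
      rw [Nat.one_le_iff_ne_zero, Ne, Multiset.count_eq_zero]; simpa using h1
    omega
  set B : Multiset ℕ := (↑r2 : Multiset ℕ) with hB
  have hcountB : ∀ x, B.count x ≤ (Mn n).count x := Multiset.le_iff_count.mp hBle
  set j : ℕ := B.count 2 with hj'
  set S : Finset ℕ := B.toFinset.filter (fun x => 3 ≤ x) with hS'
  have hmemS : ∀ x, x ∈ S ↔ x ∈ B ∧ 3 ≤ x := by
    intro x
    rw [hS', Finset.mem_filter, Multiset.mem_toFinset]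
  have hBmB : Bm j S = B := by
    ext x
    rw [count_Bm]
    by_cases hx2 : x = 2
    · subst hx2
      have : 2 ∉ S := fun h => by have := (hmemS 2).mp h; omega
      simp [this, hj']
    · rw [if_neg hx2]
      by_cases hx3 : 3 ≤ x
      · have hle1 : B.count x ≤ 1 := by
          have := hcountB x
          rw [count_Mn, if_neg hx2] at this
          split_ifs at this <;> omega
        by_cases hxB : x ∈ B
        · have : 1 ≤ B.count x := Multiset.one_le_count_iff_mem.mpr hxB
          rw [if_pos ((hmemS x).mpr ⟨hxB, hx3⟩)]
          omega
        · rw [if_neg (fun h => hxB ((hmemS x).mp h).1), Multiset.count_eq_zero.mpr hxB]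
      · have hxS : x ∉ S := fun h => hx3 ((hmemS x).mp h).2
        rw [if_neg hxS]
        have hxB : x ∉ B := by
          intro hxB
          have hge := mem_Mn_ge_one (Multiset.mem_of_le hBle hxB)
          have hx012 : x = 0 ∨ x = 1 ∨ x = 2 := by omega
          rcases hx012 with h | h | h <;> subst h
          · omega
          · exact h1B (by simpa [hB] using hxB)
          · exact hx2 rfl
        rw [Multiset.count_eq_zero.mpr hxB]
  have hr1 : Mn n - B = (↑r1 : Multiset ℕ) := by
    rw [← hmult]; exact add_tsub_cancel_right _ _
  have hPhiw : Phi n j S = w := by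
    rw [Phi, hBmB, hr1, coe_sort_list r1 hc1, coe_sort_list r2 hc2, hweq]
  refine ⟨j, S, ?_, ?_, ?_, ?_, hPhiw.symm⟩
  · have := hcountB 2
    rw [count_Mn] at this
    split_ifs at this <;> omega
  · intro x hx
    obtain ⟨hxB, hx3⟩ := (hmemS x).mp hx
    have hxMn := Multiset.mem_of_le hBle hxB
    rw [Finset.mem_Icc]
    refine ⟨hx3, ?_⟩
    rw [Mn, Multiset.mem_cons] at hxMn
    rcases hxMn with h | h
    · omega
    · have := List.mem_range'_1.mp (by simpa using h)
      omega
  · rw [hBmB, hB]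
    simpa using hne2
  · rw [hPhiw]
    intro hc
    have h2 := hw.2.2
    rw [hc, numRuns_sortM] at h2
    omega


lemma drop_range' (s m k : ℕ) (hk : k ≤ m) :
    (List.range' s m).drop k = List.range' (s + k) (m - k) := by
  have hsplit : List.range' s m = List.range' s k ++ List.range' (s + k) (m - k) := by
    have := List.range'_append (s := s) (m := k) (n := m - k) (step := 1)
    simp only [one_mul, Nat.add_sub_cancel' hk] at this
    exact this.symm
  rw [hsplit, List.drop_left' (by simp)]

lemma sortM_length (n : ℕ) (hn : 1 ≤ n) : (sortM n).length = n + 1 := by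
  rw [sortM]
  simp [List.length_range']
  omega

lemma Icc_val (a b : ℕ) : (Finset.Icc a b).val = ↑(List.range' a (b + 1 - a)) := by
  rw [Nat.Icc_eq_range']

lemma range'_cons (s m : ℕ) (hm : 1 ≤ m) :
    List.range' s m = s :: List.range' (s + 1) (m - 1) := by
  conv_lhs => rw [show m = (m - 1) + 1 by omega]
  rw [List.range'_succ]

lemma Bm_drop1 {n : ℕ} (hn : 3 ≤ n) :
    Bm 2 (Finset.Icc 3 n) = ↑(List.drop 1 (sortM n)) := by
  rw [Bm, Icc_val, sortM]
  show Multiset.replicate 2 2 + ↑(List.range' 3 (n + 1 - 3)) = ↑(2 :: List.range' 2 (n - 1))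
  rw [range'_cons 2 (n - 1) (by omega), ← Multiset.coe_replicate]
  show (↑([2, 2] : List ℕ) : Multiset ℕ) + ↑(List.range' 3 (n + 1 - 3)) =
    ↑(2 :: 2 :: List.range' 3 (n - 1 - 1))
  rw [Multiset.coe_add, show n + 1 - 3 = n - 1 - 1 from by omega]
  rfl

lemma Bm_drop2 {n : ℕ} (hn : 3 ≤ n) :
    Bm 1 (Finset.Icc 3 n) = ↑(List.drop 2 (sortM n)) := by
  rw [Bm, Icc_val, sortM]
  show Multiset.replicate 1 2 + ↑(List.range' 3 (n + 1 - 3)) = ↑(List.range' 2 (n - 1))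
  rw [range'_cons 2 (n - 1) (by omega), ← Multiset.coe_replicate]
  show (↑([2] : List ℕ) : Multiset ℕ) + ↑(List.range' 3 (n + 1 - 3)) =
    ↑(2 :: List.range' 3 (n - 1 - 1))
  rw [Multiset.coe_add, show n + 1 - 3 = n - 1 - 1 from by omega]
  rfl

lemma Bm_dropk {n k : ℕ} (hn : 3 ≤ n) (hk : 3 ≤ k) (hkn : k ≤ n) :
    Bm 0 (Finset.Icc k n) = ↑(List.drop k (sortM n)) := by
  rw [Bm, Icc_val, sortM]
  show (0 : Multiset ℕ) + ↑(List.range' k (n + 1 - k)) =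
    ↑(List.drop k (1 :: 2 :: List.range' 2 (n - 1)))
  rw [zero_add]
  have hdk : List.drop k (1 :: 2 :: List.range' 2 (n - 1)) =
      List.drop (k - 2) (List.range' 2 (n - 1)) := by
    conv_lhs => rw [show k = (k - 2) + 1 + 1 by omega]
    rw [List.drop_succ_cons, List.drop_succ_cons]
  rw [hdk, drop_range' 2 (n - 1) (k - 2) (by omega)]
  congr 2
  omega
  omega

lemma Bm_inj {n j j' : ℕ} {S S' : Finset ℕ} (hS : S ⊆ Finset.Icc 3 n)
    (hS' : S' ⊆ Finset.Icc 3 n) (h : Bm j S = Bm j' S') : j = j' ∧ S = S' := by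
  have h2 := congrArg (Multiset.count 2) h
  rw [count_Bm, count_Bm] at h2
  simp [two_notin_S hS, two_notin_S hS'] at h2
  refine ⟨h2, ?_⟩
  subst h2
  rw [Bm, Bm] at h
  exact Finset.val_inj.mp (add_left_cancel h)


def Idx (n : ℕ) : Finset (ℕ × Finset ℕ) := Finset.range 3 ×ˢ (Finset.Icc 3 n).powerset

def Igood (n : ℕ) : Finset (ℕ × Finset ℕ) :=
  (Idx n).filter (fun p => Bm p.1 p.2 ≠ 0 ∧ Phi n p.1 p.2 ≠ sortM n)

def Fw (n : ℕ) : Finset (List ℕ) := (Igood n).image (fun p => Phi n p.1 p.2)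

lemma mem_Igood {n : ℕ} {p : ℕ × Finset ℕ} : p ∈ Igood n ↔
    (p.1 ≤ 2 ∧ p.2 ⊆ Finset.Icc 3 n) ∧ Bm p.1 p.2 ≠ 0 ∧ Phi n p.1 p.2 ≠ sortM n := by
  rw [Igood, Finset.mem_filter, Idx, Finset.mem_product, Finset.mem_range, Finset.mem_powerset]
  constructor
  · rintro ⟨⟨h1, h2⟩, h3⟩
    exact ⟨⟨by omega, h2⟩, h3⟩
  · rintro ⟨⟨h1, h2⟩, h3⟩
    exact ⟨⟨by omega, h2⟩, h3⟩

lemma set_eq {n : ℕ} (hn : 3 ≤ n) : flatInsK {2} n 2 = ↑(Fw n) := by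
  ext w
  constructor
  · intro hw
    obtain ⟨j, S, hj, hS, hB0, hne, hweq⟩ := mem_image_rev hn w hw
    exact Finset.mem_coe.mpr (Finset.mem_image.mpr
      ⟨(j, S), mem_Igood.mpr ⟨⟨hj, hS⟩, hB0, hne⟩, hweq.symm⟩)
  · intro hw
    obtain ⟨p, hp, hpe⟩ := Finset.mem_image.mp (Finset.mem_coe.mp hw)
    obtain ⟨⟨hj, hS⟩, hB0, hne⟩ := mem_Igood.mp hp
    rw [← hpe]
    exact phi_mem hn hj hS hB0 hne

lemma inj_on {n : ℕ} (hn : 3 ≤ n) :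
    Set.InjOn (fun p : ℕ × Finset ℕ => Phi n p.1 p.2) ↑(Igood n) := by
  intro p hp q hq he
  obtain ⟨⟨hjp, hSp⟩, hB0p, hnep⟩ := mem_Igood.mp (Finset.mem_coe.mp hp)
  obtain ⟨⟨hjq, hSq⟩, hB0q, hneq⟩ := mem_Igood.mp (Finset.mem_coe.mp hq)
  have hr := congrArg runs he
  simp only at hr
  rw [phi_runs hn hjp hSp hB0p hnep, phi_runs hn hjq hSq hB0q hneq] at hr
  have hsort : (Bm p.1 p.2).sort (· ≤ ·) = (Bm q.1 q.2).sort (· ≤ ·) := by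
    simpa using (List.cons_eq_cons.mp hr).2
  have hBeq : Bm p.1 p.2 = Bm q.1 q.2 := by
    rw [← Multiset.sort_eq (Bm p.1 p.2) (· ≤ ·), ← Multiset.sort_eq (Bm q.1 q.2) (· ≤ ·), hsort]
  obtain ⟨h1, h2⟩ := Bm_inj hSp hSq hBeq
  exact Prod.ext h1 h2

lemma card_Idx {n : ℕ} (hn : 3 ≤ n) : (Idx n).card = 3 * 2 ^ (n - 2) := by
  rw [Idx, Finset.card_product, Finset.card_range, Finset.card_powerset, Nat.card_Icc,
    show n + 1 - 3 = n - 2 from by omega]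

def badF (n : ℕ) : Finset (ℕ × Finset ℕ) :=
  insert (0, (∅ : Finset ℕ)) (insert (2, Finset.Icc 3 n) (insert (1, Finset.Icc 3 n)
    ((Finset.Icc 3 n).image (fun k => (0, Finset.Icc k n)))))

lemma Icc_inj {n a b : ℕ} (ha : a ∈ Finset.Icc 3 n) (hb : b ∈ Finset.Icc 3 n)
    (h : Finset.Icc a n = Finset.Icc b n) : a = b := by
  have ha' := Finset.mem_Icc.mp ha
  have hb' := Finset.mem_Icc.mp hb
  have h1 : a ∈ Finset.Icc b n := h ▸ Finset.mem_Icc.mpr ⟨le_refl a, ha'.2⟩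
  have h2 : b ∈ Finset.Icc a n := h ▸ Finset.mem_Icc.mpr ⟨le_refl b, hb'.2⟩
  have := Finset.mem_Icc.mp h1
  have := Finset.mem_Icc.mp h2
  omega

lemma badF_card {n : ℕ} (hn : 3 ≤ n) : (badF n).card = n + 1 := by
  rw [badF]
  have himg : ((Finset.Icc 3 n).image (fun k => (0, Finset.Icc k n))).card = n - 2 := by
    rw [Finset.card_image_of_injOn (fun a ha b hb he => Icc_inj ha hb (congrArg Prod.snd he)),
      Nat.card_Icc]
    omega
  have h1 : (1, Finset.Icc 3 n) ∉ (Finset.Icc 3 n).image (fun k => (0, Finset.Icc k n)) := by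
    simp only [Finset.mem_image, Prod.mk.injEq]
    rintro ⟨k, hk, h01, -⟩
    omega
  have h2 : (2, Finset.Icc 3 n) ∉ insert (1, Finset.Icc 3 n)
      ((Finset.Icc 3 n).image (fun k => (0, Finset.Icc k n))) := by
    simp only [Finset.mem_insert, Finset.mem_image, Prod.mk.injEq]
    rintro (⟨h21, -⟩ | ⟨k, hk, h02, -⟩) <;> omega
  have h0 : (0, (∅ : Finset ℕ)) ∉ insert (2, Finset.Icc 3 n) (insert (1, Finset.Icc 3 n)
      ((Finset.Icc 3 n).image (fun k => (0, Finset.Icc k n)))) := by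
    simp only [Finset.mem_insert, Finset.mem_image, Prod.mk.injEq]
    rintro (⟨h02, -⟩ | ⟨h01, -⟩ | ⟨k, hk, -, hke⟩)
    · omega
    · omega
    · have hk' := Finset.mem_Icc.mp hk
      have hne : (Finset.Icc k n).Nonempty := Finset.nonempty_Icc.mpr hk'.2
      rw [hke] at hne
      exact Finset.not_nonempty_empty hne
  rw [Finset.card_insert_of_notMem h0, Finset.card_insert_of_notMem h2,
    Finset.card_insert_of_notMem h1, himg]
  omega

lemma phi_drop {n j : ℕ} {S : Finset ℕ} {k : ℕ} (hn : 1 ≤ n)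
    (hB : Bm j S = ↑(List.drop k (sortM n))) : Phi n j S = sortM n := by
  have htd := List.take_append_drop k (sortM n)
  have hA : Mn n - Bm j S = ↑(List.take k (sortM n)) := by
    have h2 : (↑(sortM n) : Multiset ℕ) =
        ↑(List.take k (sortM n)) + ↑(List.drop k (sortM n)) := by
      rw [Multiset.coe_add, htd]
    rw [hB, ← sortM_coe n hn, h2]
    exact add_tsub_cancel_right _ _
  have hst : List.Pairwise (· ≤ ·) (List.take k (sortM n)) :=
    List.Pairwise.sublist (List.take_sublist k (sortM n)) (sortM_sorted n)
  have hsd : List.Pairwise (· ≤ ·) (List.drop k (sortM n)) :=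
    List.Pairwise.sublist (List.drop_sublist k (sortM n)) (sortM_sorted n)
  rw [Phi, hA, hB, sort_unique _ _ hst rfl, sort_unique _ _ hsd rfl, htd]


lemma Bm_zero {j : ℕ} {S : Finset ℕ} (h : Bm j S = 0) : j = 0 ∧ S = ∅ := by
  have hc := congrArg Multiset.card h
  rw [Bm_card, Multiset.card_zero] at hc
  exact ⟨by omega, Finset.card_eq_zero.mp (by omega)⟩

lemma bad_eq {n : ℕ} (hn : 3 ≤ n) :
    (Idx n).filter (fun p => ¬(Bm p.1 p.2 ≠ 0 ∧ Phi n p.1 p.2 ≠ sortM n)) = badF n := by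
  ext ⟨j, S⟩
  rw [Finset.mem_filter]
  constructor
  · rintro ⟨hidx, hbad⟩
    rw [Idx, Finset.mem_product, Finset.mem_range, Finset.mem_powerset] at hidx
    obtain ⟨hj3, hS⟩ := hidx
    have hj : j ≤ 2 := by omega
    by_cases hB0 : Bm j S = 0
    · obtain ⟨e1, e2⟩ := Bm_zero hB0
      subst e1; subst e2
      simp [badF]
    · have hPhi : Phi n j S = sortM n := by tauto
      have hle := Bm_le (show 2 ≤ n by omega) hj hS
      set kA := Multiset.card (Mn n - Bm j S) with hkA
      have hsB : (Bm j S).sort (· ≤ ·) = List.drop kA (sortM n) := by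
        have h1 : Phi n j S = ((Mn n - Bm j S).sort (· ≤ ·)) ++ ((Bm j S).sort (· ≤ ·)) := rfl
        calc (Bm j S).sort (· ≤ ·)
            = List.drop (((Mn n - Bm j S).sort (· ≤ ·)).length) (Phi n j S) := by
              rw [h1, List.drop_left]
          _ = List.drop kA (sortM n) := by rw [hPhi, Multiset.length_sort]
      have hBdrop : Bm j S = ↑(List.drop kA (sortM n)) := by
        rw [← Multiset.sort_eq (Bm j S) (· ≤ ·), hsB]
      have hcard : kA = n + 1 - (j + S.card) := by
        rw [hkA, Multiset.card_sub hle, Mn_card, Bm_card]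
      have hBpos : 1 ≤ j + S.card := by
        by_contra hc
        push_neg at hc
        exact hB0 (Multiset.card_eq_zero.mp (by rw [Bm_card]; omega))
      have hScard : S.card ≤ n - 2 := by
        have := Finset.card_le_card hS
        rwa [Nat.card_Icc, show n + 1 - 3 = n - 2 from by omega] at this
      have hkn : kA ≤ n := by omega
      rcases (show kA = 1 ∨ kA = 2 ∨ 3 ≤ kA from by omega) with h | h | h
      · rw [h, ← Bm_drop1 hn] at hBdrop
        obtain ⟨e1, e2⟩ := Bm_inj hS (Finset.Subset.refl _) hBdrop
        simp only [badF, Finset.mem_insert, Prod.mk.injEq]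
        exact Or.inr (Or.inl ⟨e1, e2⟩)
      · rw [h, ← Bm_drop2 hn] at hBdrop
        obtain ⟨e1, e2⟩ := Bm_inj hS (Finset.Subset.refl _) hBdrop
        simp only [badF, Finset.mem_insert, Prod.mk.injEq]
        exact Or.inr (Or.inr (Or.inl ⟨e1, e2⟩))
      · rw [← Bm_dropk hn h hkn] at hBdrop
        have hsub : Finset.Icc kA n ⊆ Finset.Icc 3 n :=
          Finset.Icc_subset_Icc (by omega) (le_refl n)
        obtain ⟨e1, e2⟩ := Bm_inj hS hsub hBdrop
        rw [badF]
        simp only [Finset.mem_insert, Finset.mem_image, Prod.mk.injEq]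
        right; right; right
        exact ⟨kA, Finset.mem_Icc.mpr ⟨h, hkn⟩, e1.symm, e2.symm⟩
  · intro hmem
    rw [badF] at hmem
    simp only [Finset.mem_insert, Finset.mem_image] at hmem
    have hidx : ∀ (j' : ℕ) (S' : Finset ℕ), j' ≤ 2 → S' ⊆ Finset.Icc 3 n →
        (j', S') ∈ Idx n := by
      intro j' S' h1 h2
      rw [Idx, Finset.mem_product, Finset.mem_range, Finset.mem_powerset]
      exact ⟨by omega, h2⟩
    rcases hmem with h | h | h | ⟨k, hk, h⟩
    · rw [Prod.mk.injEq] at h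
      obtain ⟨e1, e2⟩ := h
      subst e1; subst e2
      exact ⟨hidx 0 ∅ (by omega) (by simp), fun hc => hc.1 (by simp [Bm])⟩
    · rw [Prod.mk.injEq] at h
      obtain ⟨e1, e2⟩ := h
      subst e1; subst e2
      exact ⟨hidx 2 _ (by omega) (Finset.Subset.refl _),
        fun hc => hc.2 (phi_drop (by omega) (Bm_drop1 hn))⟩
    · rw [Prod.mk.injEq] at h
      obtain ⟨e1, e2⟩ := h
      subst e1; subst e2
      exact ⟨hidx 1 _ (by omega) (Finset.Subset.refl _),
        fun hc => hc.2 (phi_drop (by omega) (Bm_drop2 hn))⟩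
    · rw [Prod.mk.injEq] at h
      obtain ⟨e1, e2⟩ := h
      subst e1; subst e2
      have hk' := Finset.mem_Icc.mp hk
      exact ⟨hidx 0 _ (by omega) (Finset.Icc_subset_Icc (by omega) le_rfl),
        fun hc => hc.2 (phi_drop (by omega) (Bm_dropk hn hk'.1 hk'.2))⟩

lemma card_Igood {n : ℕ} (hn : 3 ≤ n) :
    (Igood n).card = 3 * 2 ^ (n - 2) - (n + 1) := by
  have h := Finset.card_filter_add_card_filter_not
    (s := Idx n) (p := fun p => Bm p.1 p.2 ≠ 0 ∧ Phi n p.1 p.2 ≠ sortM n)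
  rw [bad_eq hn, badF_card hn, card_Idx hn] at h
  rw [Igood]
  omega

lemma aux_pow (m : ℕ) : m + 4 ≤ 3 * 2 ^ (m + 1) := by
  induction m with
  | zero => norm_num
  | succ m ih =>
    have : (2:ℕ) ^ (m + 2) = 2 * 2 ^ (m + 1) := by ring
    omega

lemma arith (m : ℕ) :
    3 * 2 ^ (m + 1) - (m + 4) = ∑ i ∈ Finset.range (m + 1), 2 ^ i * (m + 2 - i) := by
  induction m with
  | zero => simp
  | succ m ih =>
    rw [Finset.sum_range_succ']
    have hc : ∀ i, 2 ^ (i + 1) * (m + 1 + 2 - (i + 1)) = 2 * (2 ^ i * (m + 2 - i)) := by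
      intro i
      rw [show m + 1 + 2 - (i + 1) = m + 2 - i from by omega, pow_succ]
      ring
    rw [Finset.sum_congr rfl (fun i _ => hc i), ← Finset.mul_sum, ← ih]
    have h1 := aux_pow m
    have h2 : (2:ℕ) ^ (m + 1 + 1) = 2 * 2 ^ (m + 1) := by ring
    simp only [pow_zero, one_mul]
    omega

end FlatPF

open FlatPF in
/-- For `n ≥ 3`, the number of flattened `{2}`-insertion parking functions of order
`n` with exactly two runs is `∑_{i=0}^{n-3} 2^i (n-1-i)`. -/
theorem stmt9 (n : ℕ) (hn : 3 ≤ n) :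
    fS {2} n 2 = ∑ i ∈ Finset.range (n - 2), 2 ^ i * (n - 1 - i) := by
  rw [fS, set_eq hn, Set.ncard_coe_finset, Fw,
    Finset.card_image_of_injOn (inj_on hn), card_Igood hn]
  obtain ⟨m, rfl⟩ : ∃ m, n = m + 3 := ⟨n - 3, by omega⟩
  rw [show m + 3 - 2 = m + 1 from by omega]
  rw [show (3 : ℕ) * 2 ^ (m + 1) - (m + 3 + 1) = 3 * 2 ^ (m + 1) - (m + 4) from by omega]
  rw [arith m]
  exact Finset.sum_congr rfl (fun i _ => by rw [show m + 3 - 1 - i = m + 2 - i from by omega])
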